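/- arXiv:2602.11899 — 2 statements merged into one kernel-verified Lean document; each statement's English description precedes it below -/
import Mathlib

section
/- Let g : ℝ → ℝ be the saturation function g(x) = L for x ≤ L, g(x) = x for L < x < U, g(x) = U for x ≥ U, with L < U real. Let e be a standard normal random variable and define G(s) = E[g(s + e)]. Then G(s) = U + (L - s)·Φ(L - s) - (U - s)·Φ(U - s) + φ(L - s) - φ(U - s), where Φ and φ denote the standard normal cumulative distribution function and density. -/
open MeasureTheory ProbabilityTheory Real Filter Set
open scoped NNReal ENNReal

/-- Standard normal cumulative distribution function. -/
noncomputable def stdPhi (x : ℝ) : ℝ := (gaussianReal 0 1 (Set.Iic x)).toReal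

/-- Standard normal probability density function. -/
noncomputable def stdpdf (x : ℝ) : ℝ :=
  (Real.sqrt (2 * Real.pi))⁻¹ * Real.exp (-x ^ 2 / 2)

lemma stdpdf_eq (x : ℝ) : stdpdf x = gaussianPDFReal 0 1 x := by
  simp [stdpdf, gaussianPDFReal]

lemma stdpdf_nonneg (x : ℝ) : 0 ≤ stdpdf x := by
  rw [stdpdf_eq]; exact gaussianPDFReal_nonneg 0 1 x

lemma gint (f : ℝ → ℝ) :
    ∫ x, f x ∂(gaussianReal 0 1) = ∫ x, stdpdf x * f x := by
  rw [gaussianReal_of_var_ne_zero 0 one_ne_zero]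
  have h : gaussianPDF 0 1
      = fun x => ((Real.toNNReal (gaussianPDFReal 0 1 x) : NNReal) : ENNReal) := rfl
  rw [h, integral_withDensity_eq_integral_smul ((measurable_gaussianPDFReal 0 1).real_toNNReal) f]
  congr 1; funext x
  rw [NNReal.smul_def, smul_eq_mul, Real.coe_toNNReal _ (gaussianPDFReal_nonneg 0 1 x), stdpdf_eq]

lemma gintegrable (f : ℝ → ℝ) :
    Integrable f (gaussianReal 0 1) ↔ Integrable (fun x => f x * stdpdf x) := by
  rw [gaussianReal_of_var_ne_zero 0 one_ne_zero,
    integrable_withDensity_iff (measurable_gaussianPDF 0 1)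
      (ae_of_all _ fun x => ENNReal.ofReal_lt_top)]
  have hfun : (fun x => f x * (gaussianPDF 0 1 x).toReal) = fun x => f x * stdpdf x := by
    funext x
    rw [gaussianPDF, ENNReal.toReal_ofReal (gaussianPDFReal_nonneg 0 1 x), stdpdf_eq]
  rw [hfun]

lemma hpdf_int : Integrable stdpdf := by
  have := integrable_gaussianPDFReal 0 1
  exact this.congr (ae_of_all _ fun x => (stdpdf_eq x).symm)

lemma hxpdf_int : Integrable (fun x => x * stdpdf x) := by
  have h := (integrable_mul_exp_neg_mul_sq (b := (1:ℝ)/2) (by norm_num)).const_mul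
    ((Real.sqrt (2 * Real.pi))⁻¹)
  refine h.congr (ae_of_all _ fun x => ?_)
  show (Real.sqrt (2 * Real.pi))⁻¹ * (x * Real.exp (-(1/2 : ℝ) * x ^ 2)) = x * stdpdf x
  rw [stdpdf, show -x ^ 2 / 2 = -(1/2 : ℝ) * x ^ 2 by ring]; ring

lemma hasDeriv_negstdpdf (x : ℝ) :
    HasDerivAt (fun y => -stdpdf y) (x * stdpdf x) x := by
  have h : HasDerivAt (fun y : ℝ => -y ^ 2 / 2) (-x) x := by
    have := ((hasDerivAt_pow 2 x).neg.div_const 2)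
    exact this.congr_deriv (by norm_num; ring)
  have h2 := HasDerivAt.const_mul ((Real.sqrt (2 * Real.pi))⁻¹) h.exp
  refine h2.neg.congr_deriv ?_
  unfold stdpdf; ring

lemma tendsto_exp_aux_atTop : Tendsto (fun y : ℝ => Real.exp (-y ^ 2 / 2)) atTop (nhds 0) := by
  have hsq : Tendsto (fun y : ℝ => y ^ 2 / 2) atTop atTop :=
    Tendsto.atTop_div_const (by norm_num) (tendsto_pow_atTop (n := 2) (by norm_num))
  refine (Real.tendsto_exp_neg_atTop_nhds_zero.comp hsq).congr fun y => ?_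
  simp [Function.comp_def, neg_div]

lemma tendsto_exp_aux_atBot : Tendsto (fun y : ℝ => Real.exp (-y ^ 2 / 2)) atBot (nhds 0) := by
  have hpow : Tendsto (fun y : ℝ => y ^ 2) atBot atTop := by
    have ha : Tendsto (fun y : ℝ => y ^ 2) atTop atTop := tendsto_pow_atTop (by norm_num)
    have hb : Tendsto (fun y : ℝ => -y) atBot atTop := tendsto_neg_atBot_atTop
    refine (ha.comp hb).congr fun y => ?_
    simp [Function.comp_def]
  have hsq : Tendsto (fun y : ℝ => y ^ 2 / 2) atBot atTop :=
    Tendsto.atTop_div_const (by norm_num) hpow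
  refine (Real.tendsto_exp_neg_atTop_nhds_zero.comp hsq).congr fun y => ?_
  simp [Function.comp_def, neg_div]

lemma stdpdf_def : stdpdf = fun x : ℝ => (Real.sqrt (2 * Real.pi))⁻¹ * Real.exp (-x ^ 2 / 2) :=
  rfl

lemma tendsto_stdpdf_atBot : Tendsto stdpdf atBot (nhds 0) := by
  have h2 : Tendsto (fun x : ℝ => (Real.sqrt (2 * Real.pi))⁻¹ * Real.exp (-x ^ 2 / 2))
      atBot (nhds ((Real.sqrt (2 * Real.pi))⁻¹ * 0)) := tendsto_exp_aux_atBot.const_mul _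
  rw [mul_zero] at h2
  rw [stdpdf_def]
  exact h2

lemma tendsto_stdpdf_atTop : Tendsto stdpdf atTop (nhds 0) := by
  have h2 : Tendsto (fun x : ℝ => (Real.sqrt (2 * Real.pi))⁻¹ * Real.exp (-x ^ 2 / 2))
      atTop (nhds ((Real.sqrt (2 * Real.pi))⁻¹ * 0)) := tendsto_exp_aux_atTop.const_mul _
  rw [mul_zero] at h2
  rw [stdpdf_def]
  exact h2

lemma L_Iic (a : ℝ) : ∫ x in Iic a, x * stdpdf x = -stdpdf a := by
  have := integral_Iic_of_hasDerivAt_of_tendsto'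
    (f := fun y => -stdpdf y) (f' := fun x => x * stdpdf x) (a := a)
    (fun x _ => hasDeriv_negstdpdf x) hxpdf_int.integrableOn
    (by simpa using tendsto_stdpdf_atBot.neg)
  simpa using this

lemma L_Ioi (b : ℝ) : ∫ x in Ioi b, x * stdpdf x = stdpdf b := by
  have := integral_Ioi_of_hasDerivAt_of_tendsto'
    (f := fun y => -stdpdf y) (f' := fun x => x * stdpdf x) (a := b)
    (fun x _ => hasDeriv_negstdpdf x) hxpdf_int.integrableOn
    (by simpa using tendsto_stdpdf_atTop.neg)
  simpa using this

lemma L_phi_Iic (a : ℝ) : ∫ x in Iic a, stdpdf x = stdPhi a := by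
  rw [stdPhi, gaussianReal_apply_eq_integral 0 one_ne_zero,
    ENNReal.toReal_ofReal (integral_nonneg fun x => gaussianPDFReal_nonneg 0 1 x)]
  exact setIntegral_congr_fun measurableSet_Iic fun x _ => stdpdf_eq x

lemma L_phi_total : ∫ x, stdpdf x = 1 := by
  rw [show ∫ x, stdpdf x = ∫ x, gaussianPDFReal 0 1 x from
    integral_congr_ae (ae_of_all _ fun x => stdpdf_eq x)]
  exact integral_gaussianPDFReal_eq_one 0 one_ne_zero

lemma L_phi_Ioi (b : ℝ) : ∫ x in Ioi b, stdpdf x = 1 - stdPhi b := by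
  have h := integral_add_compl (measurableSet_Iic (a := b)) hpdf_int
  rw [Set.compl_Iic] at h
  rw [← L_phi_total, ← h, L_phi_Iic]; ring

lemma intB (a : ℝ) :
    ∫ e, max (a - e) 0 ∂(gaussianReal 0 1) = a * stdPhi a + stdpdf a := by
  rw [gint]
  have h1 : (fun e => stdpdf e * max (a - e) 0)
      = Set.indicator (Iic a) (fun e => a * stdpdf e - e * stdpdf e) := by
    funext e
    by_cases h : e ≤ a
    · rw [Set.indicator_of_mem (mem_Iic.mpr h), max_eq_left (by linarith)]; ring
    · push_neg at h
      rw [Set.indicator_of_notMem (fun hm => absurd (mem_Iic.mp hm) (not_le.mpr h)),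
        max_eq_right (by linarith), mul_zero]
  rw [h1, integral_indicator measurableSet_Iic,
    integral_sub ((hpdf_int.const_mul a).integrableOn) hxpdf_int.integrableOn,
    MeasureTheory.integral_const_mul, L_phi_Iic, L_Iic]
  ring

lemma intC (b : ℝ) :
    ∫ e, max (e - b) 0 ∂(gaussianReal 0 1) = stdpdf b - b * (1 - stdPhi b) := by
  rw [gint]
  have h1 : (fun e => stdpdf e * max (e - b) 0)
      = Set.indicator (Ioi b) (fun e => e * stdpdf e - b * stdpdf e) := by
    funext e
    by_cases h : b < e
    · rw [Set.indicator_of_mem (mem_Ioi.mpr h), max_eq_left (by linarith)]; ring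
    · push_neg at h
      rw [Set.indicator_of_notMem (fun hm => absurd (mem_Ioi.mp hm) (not_lt.mpr h)),
        max_eq_right (by linarith), mul_zero]
  rw [h1, integral_indicator measurableSet_Ioi,
    integral_sub hxpdf_int.integrableOn ((hpdf_int.const_mul b).integrableOn),
    MeasureTheory.integral_const_mul, L_phi_Ioi, L_Ioi]

lemma int_id_g : Integrable (fun e : ℝ => e) (gaussianReal 0 1) :=
  (gintegrable _).mpr hxpdf_int

lemma mean_zero : ∫ e, e ∂(gaussianReal 0 1) = 0 := by
  rw [gint]
  have h : (fun x : ℝ => stdpdf x * x) = fun x => x * stdpdf x := by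
    funext x; ring
  rw [h, ← integral_add_compl (measurableSet_Iic (a := (0:ℝ))) hxpdf_int, Set.compl_Iic,
    L_Iic, L_Ioi]
  ring

lemma int_maxA (a : ℝ) : Integrable (fun e => max (a - e) 0) (gaussianReal 0 1) := by
  have hdom : Integrable (fun e : ℝ => |a| + |e|) (gaussianReal 0 1) :=
    (integrable_const |a|).add int_id_g.abs
  refine hdom.mono
    ((continuous_const.sub continuous_id).max continuous_const).aestronglyMeasurable
    (ae_of_all _ fun e => ?_)
  show ‖max (a - e) 0‖ ≤ ‖|a| + |e|‖
  rw [Real.norm_eq_abs, Real.norm_eq_abs, abs_of_nonneg (le_max_right _ _),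
    abs_of_nonneg (by positivity : (0:ℝ) ≤ |a| + |e|)]
  exact max_le (by cases abs_cases a <;> cases abs_cases e <;> linarith) (by positivity)

lemma int_maxB (b : ℝ) : Integrable (fun e => max (e - b) 0) (gaussianReal 0 1) := by
  have hdom : Integrable (fun e : ℝ => |b| + |e|) (gaussianReal 0 1) :=
    (integrable_const |b|).add int_id_g.abs
  refine hdom.mono
    ((continuous_id.sub continuous_const).max continuous_const).aestronglyMeasurable
    (ae_of_all _ fun e => ?_)
  show ‖max (e - b) 0‖ ≤ ‖|b| + |e|‖
  rw [Real.norm_eq_abs, Real.norm_eq_abs, abs_of_nonneg (le_max_right _ _),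
    abs_of_nonneg (by positivity : (0:ℝ) ≤ |b| + |e|)]
  exact max_le (by cases abs_cases b <;> cases abs_cases e <;> linarith) (by positivity)

theorem stmt2 (L U : ℝ) (hLU : L < U) (g : ℝ → ℝ)
    (hg : ∀ x, g x = if x ≤ L then L else if x < U then x else U) (s : ℝ) :
    ∫ e, g (s + e) ∂(gaussianReal 0 1) =
      U + (L - s) * stdPhi (L - s) - (U - s) * stdPhi (U - s)
        + stdpdf (L - s) - stdpdf (U - s) := by
  have hdecomp : ∀ e : ℝ, g (s + e) =
      ((s + e) + max (L - s - e) 0) - max (e - (U - s)) 0 := by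
    intro e
    rw [hg]
    split_ifs with h1 h2
    · rw [max_eq_left (by linarith), max_eq_right (by linarith)]; ring
    · push_neg at h1
      rw [max_eq_right (by linarith), max_eq_right (by linarith)]; ring
    · push_neg at h1 h2
      rw [max_eq_right (by linarith), max_eq_left (by linarith)]; ring
  have i1 : Integrable (fun e : ℝ => s + e) (gaussianReal 0 1) :=
    (integrable_const s).add int_id_g
  have i2 := int_maxA (L - s)
  have i3 := int_maxB (U - s)
  have i12 : Integrable (fun e : ℝ => s + e + max (L - s - e) 0) (gaussianReal 0 1) :=
    i1.add i2
  rw [integral_congr_ae (ae_of_all _ hdecomp), integral_sub i12 i3,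
    integral_add i1 i2, integral_add (integrable_const s) int_id_g,
    mean_zero, integral_const, intB, intC]
  simp only [probReal_univ, measure_univ, smul_eq_mul, one_mul, add_zero]
  ring
end

section
/- Let f(x) = 1/(1 + e^{-x}) be the sigmoid function and for fixed φₖ ∈ ℝ^d, θ* ∈ ℝ^d with |⟨φₖ, θ⟩| ≤ M and |⟨φₖ, θ*⟩| ≤ M, define J(θ) = -f(⟨φₖ, θ*⟩)·log f(⟨φₖ, θ⟩) - (1 - f(⟨φₖ, θ*⟩))·log(1 - f(⟨φₖ, θ⟩)) minus its minimum value (the entropy term), i.e., the KL divergence between Bernoulli(f(⟨φₖ,θ*⟩)) and Bernoulli(f(⟨φₖ,θ⟩)). Then (∂L/∂x evaluated at x = f(⟨φₖ,θ⟩))² ≤ ((1 + e^M)⁴ / (2e^{2M}))·J(θ). -/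
open RealInnerProductSpace

private lemma pinsker_aux (p q : ℝ) (hp0 : 0 < p) (hp1 : p < 1)
    (hq0 : 0 < q) (hq1 : q < 1) :
    2 * (p - q) ^ 2 ≤ p * Real.log (p / q) + (1 - p) * Real.log ((1 - p) / (1 - q)) := by
  set G : ℝ → ℝ := fun t =>
    p * Real.log p - p * Real.log t +
      ((1 - p) * Real.log (1 - p) - (1 - p) * Real.log (1 - t)) - 2 * (p - t) ^ 2 with hGdef
  have hG : ∀ t ∈ Set.Ioo (0:ℝ) 1,
      HasDerivAt G ((t - p) * (1 - 2*t)^2 / (t * (1 - t))) t := by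
    intro t ht
    obtain ⟨ht0, ht1⟩ := ht
    have h1t : (0:ℝ) < 1 - t := by linarith
    have hlog : HasDerivAt (fun t : ℝ => Real.log t) (1/t) t := by
      simpa using Real.hasDerivAt_log (ne_of_gt ht0)
    have hsub : HasDerivAt (fun t : ℝ => 1 - t) (-1) t := (hasDerivAt_id t).const_sub 1
    have hlog2 : HasDerivAt (fun t : ℝ => Real.log (1 - t)) ((1/(1-t)) * (-1)) t := by
      have := (Real.hasDerivAt_log (ne_of_gt h1t)).comp t hsub
      rw [one_div]; exact this
    have hsq : HasDerivAt (fun t : ℝ => 2 * (p - t) ^ 2) (2 * (2 * (p - t) * (-1))) t := by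
      have h0 : HasDerivAt (fun t : ℝ => p - t) (-1) t := (hasDerivAt_id t).const_sub p
      exact (h0.pow 2).const_mul 2 |>.congr_deriv (by ring)
    have := (((hlog.const_mul p).const_sub (p * Real.log p)).add
        ((hlog2.const_mul (1-p)).const_sub ((1-p) * Real.log (1-p)))).sub hsq
    refine this.congr_deriv ?_
    field_simp
    ring
  have hGp : G p = 0 := by simp [hGdef]
  have hGeq : ∀ t, 0 < t → t < 1 →
      p * Real.log (p / t) + (1 - p) * Real.log ((1 - p) / (1 - t)) - 2 * (p - t) ^ 2 = G t := by
    intro t ht0 ht1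
    rw [hGdef]
    rw [Real.log_div (ne_of_gt hp0) (ne_of_gt ht0),
        Real.log_div (by linarith : (1:ℝ) - p ≠ 0) (by intro h; nlinarith)]
    ring
  have key : 0 ≤ G q := by
    rcases le_total p q with hpq | hpq
    · have hmono : MonotoneOn G (Set.Icc p q) := by
        have hsub : Set.Icc p q ⊆ Set.Ioo (0:ℝ) 1 := fun t ⟨h1, h2⟩ => ⟨by linarith, by linarith⟩
        apply monotoneOn_of_deriv_nonneg (convex_Icc p q)
        · exact fun t ht => (hG t (hsub ht)).continuousAt.continuousWithinAt
        · rw [interior_Icc]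
          exact fun t ht => (hG t (hsub (Set.Ioo_subset_Icc_self ht))).differentiableAt.differentiableWithinAt
        · rw [interior_Icc]
          intro t ht
          rw [(hG t (hsub (Set.Ioo_subset_Icc_self ht))).deriv]
          have h1 : 0 < t := lt_trans hp0 ht.1
          have h2 : t < 1 := lt_trans ht.2 hq1
          have : (0:ℝ) ≤ (t - p) * (1 - 2*t)^2 := by
            apply mul_nonneg (by linarith [ht.1]) (sq_nonneg _)
          exact div_nonneg this (le_of_lt (mul_pos h1 (by linarith)))
      have := hmono (Set.left_mem_Icc.mpr hpq) (Set.right_mem_Icc.mpr hpq) hpq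
      linarith [hGp ▸ this]
    · have hanti : AntitoneOn G (Set.Icc q p) := by
        have hsub : Set.Icc q p ⊆ Set.Ioo (0:ℝ) 1 := fun t ⟨h1, h2⟩ => ⟨by linarith, by linarith⟩
        apply antitoneOn_of_deriv_nonpos (convex_Icc q p)
        · exact fun t ht => (hG t (hsub ht)).continuousAt.continuousWithinAt
        · rw [interior_Icc]
          exact fun t ht => (hG t (hsub (Set.Ioo_subset_Icc_self ht))).differentiableAt.differentiableWithinAt
        · rw [interior_Icc]
          intro t ht
          rw [(hG t (hsub (Set.Ioo_subset_Icc_self ht))).deriv]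
          have h1 : 0 < t := lt_trans hq0 ht.1
          have h2 : t < 1 := lt_trans ht.2 hp1
          have hnum : (t - p) * (1 - 2*t)^2 ≤ 0 :=
            mul_nonpos_of_nonpos_of_nonneg (by linarith [ht.2]) (sq_nonneg _)
          have hden : (0:ℝ) < t * (1 - t) := mul_pos h1 (by linarith)
          exact div_nonpos_of_nonpos_of_nonneg hnum (le_of_lt hden)
      have := hanti (Set.left_mem_Icc.mpr hpq) (Set.right_mem_Icc.mpr hpq) hpq
      linarith [hGp ▸ this]
  have h := hGeq q hq0 hq1
  rw [← h] at key
  linarith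

private lemma sigbounds (M a : ℝ) (ha : |a| ≤ M) :
    0 < 1 / (1 + Real.exp (-a)) ∧ 1 / (1 + Real.exp (-a)) < 1 ∧
      Real.exp M / (1 + Real.exp M) ^ 2 ≤
        (1 / (1 + Real.exp (-a))) * (1 - 1 / (1 + Real.exp (-a))) := by
  have hu : 0 < Real.exp (-a) := Real.exp_pos _
  have hv : 0 < Real.exp M := Real.exp_pos _
  have hden : (0:ℝ) < 1 + Real.exp (-a) := by linarith
  constructor
  · positivity
  constructor
  · rw [div_lt_one hden]; linarith
  · have huv : Real.exp (-a) ≤ Real.exp M := Real.exp_le_exp.mpr (by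
      have := abs_le.mp ha; linarith [this.2])
    have huv2 : 1 ≤ Real.exp (-a) * Real.exp M := by
      rw [← Real.exp_add]
      have := abs_le.mp ha
      have : (0:ℝ) ≤ -a + M := by linarith [this.1]
      calc (1:ℝ) = Real.exp 0 := (Real.exp_zero).symm
        _ ≤ _ := Real.exp_le_exp.mpr this
    have hx1 : (1:ℝ) - 1 / (1 + Real.exp (-a)) = Real.exp (-a) / (1 + Real.exp (-a)) := by
      field_simp
      ring
    rw [hx1]
    rw [div_mul_div_comm, one_mul, div_le_div_iff₀ (by positivity) (by positivity)]
    nlinarith [sq_nonneg (Real.exp M - Real.exp (-a)), hu, hv]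

theorem stmt6 {d : ℕ} (M : ℝ) (φk θstar θ : EuclideanSpace ℝ (Fin d))
    (f : ℝ → ℝ) (hf : ∀ x, f x = 1 / (1 + Real.exp (-x)))
    (hθ : |⟪φk, θ⟫| ≤ M) (hθstar : |⟪φk, θstar⟫| ≤ M)
    (y x J : ℝ) (hy : y = f ⟪φk, θstar⟫) (hx : x = f ⟪φk, θ⟫)
    (hJ : J = y * Real.log (y / x) + (1 - y) * Real.log ((1 - y) / (1 - x))) :
    ((x - y) / (x * (1 - x))) ^ 2 ≤
      ((1 + Real.exp M) ^ 4 / (2 * Real.exp (2 * M))) * J := by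
  obtain ⟨hx0, hx1, hxP⟩ := sigbounds M ⟪φk, θ⟫ hθ
  obtain ⟨hy0, hy1, -⟩ := sigbounds M ⟪φk, θstar⟫ hθstar
  rw [hf] at hx hy
  rw [← hx] at hx0 hx1 hxP
  rw [← hy] at hy0 hy1
  have hJge : 2 * (y - x) ^ 2 ≤ J := hJ ▸ pinsker_aux y x hy0 hy1 hx0 hx1
  have hP : 0 < x * (1 - x) := by nlinarith
  have hEM : 0 < Real.exp M := Real.exp_pos _
  have hE2M : Real.exp (2 * M) = Real.exp M * Real.exp M := by
    rw [← Real.exp_add]; ring_nf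
  have hr : 0 < Real.exp M / (1 + Real.exp M) ^ 2 := by positivity
  rw [div_pow, div_le_iff₀ (by positivity), hE2M]
  have h1 : (Real.exp M / (1 + Real.exp M) ^ 2) ^ 2 ≤ (x * (1 - x)) ^ 2 := by
    nlinarith
  have hc : ((1 + Real.exp M) ^ 4 / (2 * (Real.exp M * Real.exp M))) *
      (2 * (Real.exp M / (1 + Real.exp M) ^ 2) ^ 2) = 1 := by
    field_simp
  have hJ0 : 0 ≤ J := le_trans (by positivity) hJge
  have hc0 : 0 < (1 + Real.exp M) ^ 4 / (2 * (Real.exp M * Real.exp M)) := by positivity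
  have step1 : 2 * (y - x) ^ 2 * (Real.exp M / (1 + Real.exp M) ^ 2) ^ 2 ≤
      J * (x * (1 - x)) ^ 2 :=
    mul_le_mul hJge h1 (by positivity) hJ0
  calc (x - y) ^ 2
      = ((1 + Real.exp M) ^ 4 / (2 * (Real.exp M * Real.exp M)) *
        (2 * (Real.exp M / (1 + Real.exp M) ^ 2) ^ 2)) * (y - x) ^ 2 := by rw [hc]; ring
    _ = ((1 + Real.exp M) ^ 4 / (2 * (Real.exp M * Real.exp M))) *
        (2 * (y - x) ^ 2 * (Real.exp M / (1 + Real.exp M) ^ 2) ^ 2) := by ring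
    _ ≤ ((1 + Real.exp M) ^ 4 / (2 * (Real.exp M * Real.exp M))) * (J * (x * (1 - x)) ^ 2) :=
        mul_le_mul_of_nonneg_left step1 hc0.le
    _ = ((1 + Real.exp M) ^ 4 / (2 * (Real.exp M * Real.exp M))) * J * (x * (1 - x)) ^ 2 := by
        ring
end
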